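/- If CH holds and there is an ω₂-saturated κ-complete ideal over ω₁ whose quotient P(ω₁)/I is complete, then 2^{ω₁} = ω₂. -/

import Mathlib

universe u

/-- A proper, κ-complete ideal on `P(κ)` (κ realized as the type `α`)
containing all singletons. -/
structure IdealOver (α : Type u) where
  carrier : Set (Set α)
  proper : Set.univ ∉ carrier
  downward : ∀ {A B : Set α}, A ⊆ B → B ∈ carrier → A ∈ carrier
  singleton_mem : ∀ x : α, {x} ∈ carrier
  complete : ∀ s : Set (Set α), Cardinal.mk ↥s < Cardinal.mk α → s ⊆ carrier →
    ⋃₀ s ∈ carrier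

/-- `𝒜` is an antichain with respect to `I`. -/
def IsAntichainFor {α : Type u} (I : IdealOver α) (𝒜 : Set (Set α)) : Prop :=
  (∀ A ∈ 𝒜, A ∉ I.carrier) ∧ ∀ A ∈ 𝒜, ∀ B ∈ 𝒜, A ≠ B → A ∩ B ∈ I.carrier

/-- `[Z]` is a least upper bound of `{[A] : A ∈ F}` in `P(α)/I`, where
`[A] ≤ [B]` iff `A \ B ∈ I`. -/
def IsSupFor {α : Type u} (I : IdealOver α) (F : Set (Set α)) (Z : Set α) : Prop :=
  (∀ A ∈ F, A \ Z ∈ I.carrier) ∧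
    ∀ W : Set α, (∀ A ∈ F, A \ W ∈ I.carrier) → Z \ W ∈ I.carrier

/-- The quotient Boolean algebra `P(α)/I` is complete. -/
def QuotComplete {α : Type u} (I : IdealOver α) : Prop :=
  ∀ F : Set (Set α), ∃ Z : Set α, IsSupFor I F Z

open Cardinal Set

section Aux

variable {α : Type} (I : IdealOver α)

/-- A union of countably many null sets is null (ω₁-completeness). -/
lemma IdealOver.iUnion_null (hα : Cardinal.mk α = Cardinal.aleph 1)
    {ι : Type} [Countable ι] (P : ι → Set α) (h : ∀ n, P n ∈ I.carrier) :
    (⋃ n, P n) ∈ I.carrier := by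
  have h1 : Cardinal.mk ↥(Set.range P) < Cardinal.mk α := by
    rw [hα]
    exact lt_of_le_of_lt (le_trans Cardinal.mk_range_le (Cardinal.mk_le_aleph0))
      Cardinal.aleph0_lt_aleph_one
  have h2 := I.complete (Set.range P) h1 (by rintro B ⟨n, rfl⟩; exact h n)
  rwa [Set.sUnion_range] at h2

lemma IdealOver.union_null (hα : Cardinal.mk α = Cardinal.aleph 1)
    {A B : Set α} (hA : A ∈ I.carrier) (hB : B ∈ I.carrier) :
    A ∪ B ∈ I.carrier := by
  rw [Set.union_eq_iUnion]
  exact I.iUnion_null hα _ (by rintro (_ | _) <;> simpa)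

/-- Countable sets are null. -/
lemma IdealOver.countable_null (hα : Cardinal.mk α = Cardinal.aleph 1)
    {A : Set α} (hA : A.Countable) : A ∈ I.carrier := by
  have : Countable ↥A := hA.to_subtype
  have h := I.iUnion_null hα (fun x : ↥A => ({(x : α)} : Set α))
    (fun x => I.singleton_mem x)
  rwa [Set.iUnion_of_singleton_coe] at h

/-- KEY LEMMA: in an almost disjoint (mod `I`) family of functions, at most
`ℵ₁` many members can be below a fixed `g` on a positive set. -/
lemma IdealOver.lemG (hα : Cardinal.mk α = Cardinal.aleph 1)
    (hsat : ∀ 𝒜 : Set (Set α), IsAntichainFor I 𝒜 →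
      Cardinal.mk ↥𝒜 ≤ Cardinal.aleph 1)
    (lt : α → α → Prop) (hcnt : ∀ c : α, {y | lt y c}.Countable)
    {ι : Type} (F : ι → α → α)
    (had : ∀ i j, i ≠ j → {ξ | F i ξ = F j ξ} ∈ I.carrier)
    (g : α → α) :
    Cardinal.mk ↥{i | {ξ | lt (F i ξ) (g ξ)} ∉ I.carrier} ≤ Cardinal.aleph 1 := by
  classical
  -- injections of initial segments into ℕ
  have hinj : ∀ c : α, ∃ h : α → ℕ, Set.InjOn h {y | lt y c} := by
    intro c
    have : Countable ↥{y | lt y c} := (hcnt c).to_subtype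
    obtain ⟨f, hf⟩ := Countable.exists_injective_nat ↥{y | lt y c}
    refine ⟨fun y => if hy : lt y c then f ⟨y, hy⟩ else 0, ?_⟩
    intro a ha b hb hab
    simp only [Set.mem_setOf_eq] at ha hb
    have hab' : (if hy : lt a c then f ⟨a, hy⟩ else 0) = (if hy : lt b c then f ⟨b, hy⟩ else 0) := hab
    rw [dif_pos ha, dif_pos hb] at hab'
    exact Subtype.ext_iff.mp (hf hab')
  choose h hh using hinj
  set D : Set ι := {i | {ξ | lt (F i ξ) (g ξ)} ∉ I.carrier} with hD
  set P : ι → ℕ → Set α :=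
    fun i n => {ξ | lt (F i ξ) (g ξ) ∧ h (g ξ) (F i ξ) = n} with hP
  have hPn : ∀ i : ↥D, ∃ n, P i.1 n ∉ I.carrier := by
    rintro ⟨i, hi⟩
    by_contra hcon
    push_neg at hcon
    apply hi
    have hEq : {ξ | lt (F i ξ) (g ξ)} = ⋃ n, P i n := by
      ext ξ
      constructor
      · intro hξ
        exact Set.mem_iUnion.mpr ⟨h (g ξ) (F i ξ), hξ, rfl⟩
      · rintro hξ
        obtain ⟨n, hn⟩ := Set.mem_iUnion.mp hξ
        exact hn.1
    rw [hEq]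
    exact I.iUnion_null hα _ hcon
  choose nn hnn using hPn
  -- distinct members of the family give distinct pieces
  have key : ∀ (i j : ↥D) (n : ℕ), nn i = n → nn j = n → P i.1 n = P j.1 n → i = j := by
    intro i j n hi hj hEq
    by_contra hne
    have hij : i.1 ≠ j.1 := fun hc => hne (Subtype.ext hc)
    have hsub : P i.1 n ⊆ {ξ | F i.1 ξ = F j.1 ξ} := by
      intro ξ hξ
      have hξ' : ξ ∈ P j.1 n := hEq ▸ hξ
      exact hh (g ξ) hξ.1 hξ'.1 (hξ.2.trans hξ'.2.symm)
    have : P i.1 n ∈ I.carrier := I.downward hsub (had i.1 j.1 hij)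
    rw [← hi] at this
    exact hnn i this
  -- for each n, an antichain
  set 𝒜 : ℕ → Set (Set α) :=
    fun n => {A | ∃ i : ↥D, nn i = n ∧ A = P i.1 n} with h𝒜
  have hanti : ∀ n, IsAntichainFor I (𝒜 n) := by
    intro n
    constructor
    · rintro A ⟨i, hi, rfl⟩
      rw [← hi]
      exact hnn i
    · rintro A ⟨i, hi, rfl⟩ B ⟨j, hj, rfl⟩ hAB
      have hij : i.1 ≠ j.1 := by
        intro hc
        exact hAB (by rw [Subtype.ext hc])
      refine I.downward ?_ (had i.1 j.1 hij)
      intro ξ hξ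
      exact hh (g ξ) hξ.1.1 hξ.2.1 (hξ.1.2.trans hξ.2.2.symm)
  have hcard : ∀ n, Cardinal.mk ↥(𝒜 n) ≤ Cardinal.aleph 1 :=
    fun n => hsat (𝒜 n) (hanti n)
  -- fiber injections
  have hfib : ∀ n : ℕ, Cardinal.mk ↥{i : ↥D | nn i = n} ≤ Cardinal.aleph 1 := by
    intro n
    refine le_trans (Cardinal.mk_le_of_injective (f := fun i : ↥{i : ↥D | nn i = n} =>
      (⟨P i.1.1 n, ⟨i.1, i.2, rfl⟩⟩ : ↥(𝒜 n))) ?_) (hcard n)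
    rintro ⟨i, hi⟩ ⟨j, hj⟩ hEq
    have : P i.1 n = P j.1 n := congrArg Subtype.val hEq
    exact Subtype.ext (key i j n hi hj this)
  -- sum up over n
  have hEquiv : Cardinal.mk ↥D = Cardinal.mk (Σ n : ℕ, {i : ↥D | nn i = n}) :=
    Cardinal.mk_congr (Equiv.sigmaFiberEquiv nn).symm
  rw [hEquiv, Cardinal.mk_sigma]
  calc (Cardinal.sum fun n : ℕ => Cardinal.mk ↥{i : ↥D | nn i = n})
      ≤ Cardinal.sum fun _ : ℕ => Cardinal.aleph 1 := Cardinal.sum_le_sum _ _ hfib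
    _ = Cardinal.mk ℕ * Cardinal.aleph 1 := Cardinal.sum_const' ℕ _
    _ = Cardinal.aleph 1 := by
        rw [Cardinal.mk_nat, Cardinal.mul_eq_max le_rfl (Cardinal.aleph0_le_aleph 1)]
        exact max_eq_right Cardinal.aleph0_lt_aleph_one.le

end Aux

/-- Ketonen, in the setting of the paper: if CH holds and there
is an `ω₂`-saturated ω₁-complete ideal over `ω₁` whose quotient is complete,
then `2^{ω₁} = ω₂`. -/
theorem stmt19 {α : Type} (I : IdealOver α)
    (hα : Cardinal.mk α = Cardinal.aleph 1)
    (hCH : (2 : Cardinal.{0}) ^ Cardinal.aleph0 = Cardinal.aleph 1)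
    (hsat : ∀ 𝒜 : Set (Set α), IsAntichainFor I 𝒜 →
      Cardinal.mk ↥𝒜 ≤ Cardinal.aleph 1)
    (hcomp : QuotComplete I) :
    (2 : Cardinal.{0}) ^ Cardinal.aleph 1 = Cardinal.aleph 2 := by
  classical
  -- an ω₁-like well-order on α
  obtain ⟨e⟩ : Nonempty (α ≃ (Cardinal.aleph 1).ord.ToType) := by
    rw [← Cardinal.eq, hα, Cardinal.mk_ord_toType]
  set lt : α → α → Prop := fun x y => e x < e y with hlt
  have hcnt : ∀ c : α, {y | lt y c}.Countable := by
    intro c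
    have h1 : (Set.Iio (e c)).Countable :=
      (Cardinal.countable_iff_lt_aleph_one _).mpr (Cardinal.mk_Iio_ord_toType (e c))
    have h2 : {y | lt y c} = e ⁻¹' (Set.Iio (e c)) := rfl
    rw [h2]
    exact h1.preimage e.injective
  have hcnt' : ∀ x : α, {ξ | ¬ lt x ξ}.Countable := by
    intro x
    have hEq : {ξ | ¬ lt x ξ} = {y | lt y x} ∪ {x} := by
      ext ξ
      simp only [hlt, Set.mem_setOf_eq, not_lt, Set.mem_union, Set.mem_singleton_iff]
      constructor
      · intro hle
        rcases lt_or_eq_of_le hle with h | h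
        · exact Or.inl h
        · exact Or.inr (e.injective h)
      · rintro (h | rfl)
        · exact h.le
        · exact le_rfl
    rw [hEq]
    exact (hcnt x).union (Set.countable_singleton x)
  -- under CH there are only ℵ₁ countable subsets of α
  have hsmall : Cardinal.mk {s : Set α // s.Countable} ≤ Cardinal.mk α := by
    have hsurj : Function.Surjective
        (fun o : Option (ℕ → α) => o.elim (⟨∅, Set.countable_empty⟩ : {s : Set α // s.Countable})
          (fun u => ⟨Set.range u, Set.countable_range u⟩)) := by
      rintro ⟨s, hs⟩
      rcases Set.eq_empty_or_nonempty s with rfl | hne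
      · exact ⟨none, rfl⟩
      · obtain ⟨u, hu⟩ := hs.exists_eq_range hne
        exact ⟨some u, by simp [← hu]⟩
    have h1 : Cardinal.mk {s : Set α // s.Countable} ≤ Cardinal.mk (Option (ℕ → α)) :=
      Cardinal.mk_le_of_surjective hsurj
    have h2 : Cardinal.mk (Option (ℕ → α)) = Cardinal.aleph 1 + 1 := by
      rw [Cardinal.mk_option, ← Cardinal.power_def, Cardinal.mk_nat, hα, ← hCH,
        ← Cardinal.power_mul, Cardinal.aleph0_mul_aleph0, hCH]
    rw [hα]
    refine le_trans h1 (le_of_eq_of_le h2 ?_)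
    calc Cardinal.aleph 1 + 1 ≤ Cardinal.aleph 1 + Cardinal.aleph 1 := by
          exact add_le_add_right (Cardinal.one_le_aleph0.trans (Cardinal.aleph0_le_aleph 1)) _
      _ = Cardinal.aleph 1 := Cardinal.add_eq_self (Cardinal.aleph0_le_aleph 1)
  obtain ⟨cc⟩ : Nonempty ({s : Set α // s.Countable} ↪ α) := Cardinal.le_def _ _ |>.mp hsmall
  -- the coding of subsets of α by functions
  set f : Set α → α → α :=
    fun X ξ => cc ⟨X ∩ {y | lt y ξ}, (hcnt ξ).mono Set.inter_subset_right⟩ with hf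
  have had : ∀ X Y : Set α, X ≠ Y → {ξ | f X ξ = f Y ξ} ∈ I.carrier := by
    intro X Y hXY
    have hx : ∃ x, ¬(x ∈ X ↔ x ∈ Y) := by
      by_contra hcon
      push_neg at hcon
      exact hXY (Set.ext fun x => hcon x)
    obtain ⟨x, hx⟩ := hx
    refine I.downward (B := {ξ | ¬ lt x ξ}) ?_ (I.countable_null hα (hcnt' x))
    intro ξ hξ
    simp only [Set.mem_setOf_eq] at hξ ⊢
    intro hxξ
    apply hx
    have hEq : X ∩ {y | lt y ξ} = Y ∩ {y | lt y ξ} :=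
      congrArg Subtype.val (cc.injective hξ)
    constructor
    · intro hxX
      have : x ∈ Y ∩ {y | lt y ξ} := hEq ▸ (⟨hxX, hxξ⟩ : x ∈ X ∩ {y | lt y ξ})
      exact this.1
    · intro hxY
      have : x ∈ X ∩ {y | lt y ξ} := hEq.symm ▸ (⟨hxY, hxξ⟩ : x ∈ Y ∩ {y | lt y ξ})
      exact this.1
  -- lower bound: ω₂ ≤ 2^ω₁ by Cantor
  have hge : Cardinal.aleph 2 ≤ (2 : Cardinal.{0}) ^ Cardinal.aleph 1 := by
    have h2 : (2 : Ordinal) = Order.succ (1 : Ordinal) := by simp; exact one_add_one_eq_two.symm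
    rw [h2, Cardinal.aleph_succ]
    exact Order.succ_le_of_lt (Cardinal.cantor _)
  -- upper bound
  have hle : (2 : Cardinal.{0}) ^ Cardinal.aleph 1 ≤ Cardinal.aleph 2 := by
    by_contra hcon
    push_neg at hcon
    have hmkset : Cardinal.mk (Set α) = (2 : Cardinal.{0}) ^ Cardinal.aleph 1 := by
      rw [Cardinal.mk_set, hα]
    have hA : ∃ A : Set (Set α), Cardinal.mk ↥A = Cardinal.aleph 2 :=
      Cardinal.le_mk_iff_exists_set.mp (by rw [hmkset]; exact hge)
    obtain ⟨A, hA⟩ := hA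
    set DD : Set α → Set (Set α) :=
      fun X => {Y | {ξ | lt (f Y ξ) (f X ξ)} ∉ I.carrier} with hDD
    have hDDle : ∀ X : Set α, Cardinal.mk ↥(DD X) ≤ Cardinal.aleph 1 :=
      fun X => I.lemG hα hsat lt hcnt f had (f X)
    set Bad : Set (Set α) := A ∪ ⋃ X : ↥A, DD X.1 with hBad
    have hBadle : Cardinal.mk ↥Bad ≤ Cardinal.aleph 2 := by
      refine le_trans (Cardinal.mk_union_le _ _) ?_
      have hU : Cardinal.mk ↥(⋃ X : ↥A, DD X.1) ≤ Cardinal.aleph 2 := by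
        refine le_trans (Cardinal.mk_iUnion_le _) ?_
        have h1 : Cardinal.mk ↥A ≤ Cardinal.aleph 2 := le_of_eq hA
        have h2 : (⨆ X : ↥A, Cardinal.mk ↥(DD X.1)) ≤ Cardinal.aleph 1 :=
          ciSup_le' fun X => hDDle X.1
        refine le_trans (mul_le_mul' h1 h2) ?_
        rw [Cardinal.mul_eq_max (Cardinal.aleph0_le_aleph 2) (Cardinal.aleph0_le_aleph 1)]
        exact max_le le_rfl ((Cardinal.aleph_le_aleph).mpr one_le_two)
      refine le_trans (add_le_add (le_of_eq hA) hU) ?_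
      rw [Cardinal.add_eq_self (Cardinal.aleph0_le_aleph 2)]
    have hZ : ∃ Z : Set α, Z ∉ Bad := by
      by_contra hcon2
      push_neg at hcon2
      have huniv : (Set.univ : Set (Set α)) ⊆ Bad := fun Z _ => hcon2 Z
      have : Cardinal.mk (Set α) ≤ Cardinal.aleph 2 := by
        calc Cardinal.mk (Set α) = Cardinal.mk ↥(Set.univ : Set (Set α)) :=
              Cardinal.mk_univ.symm
          _ ≤ Cardinal.mk ↥Bad := Cardinal.mk_le_mk_of_subset huniv
          _ ≤ Cardinal.aleph 2 := hBadle
      rw [hmkset] at this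
      exact absurd this (not_le.mpr hcon)
    obtain ⟨Z, hZ⟩ := hZ
    have hZA : Z ∉ A := fun h => hZ (Or.inl h)
    have hAD : A ⊆ DD Z := by
      intro X hX
      have hZX : Z ≠ X := fun h => hZA (h ▸ hX)
      have h1 : {ξ | lt (f Z ξ) (f X ξ)} ∈ I.carrier := by
        by_contra hcon2
        exact hZ (Or.inr (Set.mem_iUnion.mpr ⟨⟨X, hX⟩, hcon2⟩))
      have h2 : {ξ | f Z ξ = f X ξ} ∈ I.carrier := had Z X hZX
      intro h3
      apply I.proper
      have hsub : (Set.univ : Set α) ⊆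
          ({ξ | lt (f Z ξ) (f X ξ)} ∪ {ξ | f Z ξ = f X ξ}) ∪ {ξ | lt (f X ξ) (f Z ξ)} := by
        intro ξ _
        rcases lt_trichotomy (e (f Z ξ)) (e (f X ξ)) with h | h | h
        · exact Or.inl (Or.inl h)
        · exact Or.inl (Or.inr (e.injective h))
        · exact Or.inr h
      exact I.downward hsub (I.union_null hα (I.union_null hα h1 h2) h3)
    have : Cardinal.aleph 2 ≤ Cardinal.aleph 1 := by
      calc Cardinal.aleph 2 = Cardinal.mk ↥A := hA.symm
        _ ≤ Cardinal.mk ↥(DD Z) := Cardinal.mk_le_mk_of_subset hAD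
        _ ≤ Cardinal.aleph 1 := hDDle Z
    exact absurd this (not_le.mpr ((Cardinal.aleph_lt_aleph).mpr one_lt_two))
  exact le_antisymm hle hge
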